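/- The Conolly sequence is the unique sequence H satisfying H(1)=1, H(2)=H(3)=2, H(4)=3, H(5)=4, and H(n) = H(n - H(n-2)) + H(n - 3 - H(n-5)) for n > 5; equivalently, this recursion with these initial conditions has a slow solution whose frequency sequence is the ruler function r_m. -/

import Mathlib

/-- fueled 2-adic valuation -/
def v2Aux : ℕ → ℕ → ℕ
  | 0, _ => 0
  | f + 1, m => if m % 2 = 1 ∨ m = 0 then 0 else v2Aux f (m / 2) + 1

def v2 (m : ℕ) : ℕ := v2Aux m m

lemma v2Aux_zero : ∀ f, v2Aux f 0 = 0
  | 0 => rfl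
  | f + 1 => by rw [v2Aux]; simp

lemma v2Aux_congr : ∀ m, ∀ f, m ≤ f → v2Aux f m = v2 m := by
  intro m
  induction m using Nat.strong_induction_on with
  | _ m ih =>
    intro f hf
    match m with
    | 0 => rw [v2Aux_zero]; rfl
    | m + 1 =>
      obtain ⟨f', rfl⟩ : ∃ f', f = f' + 1 := ⟨f - 1, by omega⟩
      show _ = v2Aux (m+1) (m+1)
      rw [v2Aux, v2Aux]
      by_cases h2 : (m+1) % 2 = 1
      · simp [h2]
      · have hc : ¬((m+1) % 2 = 1 ∨ m + 1 = 0) := by omega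
        rw [if_neg hc, if_neg hc,
          ih ((m+1)/2) (by omega) f' (by omega), ih ((m+1)/2) (by omega) m (by omega)]

lemma v2_odd {m : ℕ} (h : m % 2 = 1) : v2 m = 0 := by
  obtain ⟨t, rfl⟩ : ∃ t, m = t + 1 := ⟨m - 1, by omega⟩
  show v2Aux (t+1) (t+1) = 0
  rw [v2Aux]; simp [h]

lemma v2_two_mul {m : ℕ} (h : m ≠ 0) : v2 (2 * m) = v2 m + 1 := by
  obtain ⟨t, ht⟩ : ∃ t, 2 * m = t + 1 := ⟨2 * m - 1, by omega⟩
  show v2Aux (2 * m) (2 * m) = _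
  rw [ht, v2Aux]
  have h1 : ¬((t+1) % 2 = 1 ∨ t + 1 = 0) := by omega
  rw [if_neg h1]
  have h2 : (t+1)/2 = m := by omega
  rw [h2, v2Aux_congr _ _ (by omega)]

lemma v2_pow (k : ℕ) : v2 (2 ^ k) = k := by
  induction k with
  | zero => rfl
  | succ k ih => rw [pow_succ, mul_comm, v2_two_mul (by positivity), ih]

lemma v2_shift : ∀ k i, 0 < i → i < 2 ^ k → v2 (2 ^ k + i) = v2 i := by
  intro k
  induction k with
  | zero => intro i h1 h2; omega
  | succ k ih =>
    intro i h1 h2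
    rcases Nat.even_or_odd i with he | ho
    · obtain ⟨j, rfl⟩ := he
      have hj : 2 ^ (k+1) + (j + j) = 2 * (2 ^ k + j) := by ring
      have hjj : j + j = 2 * j := by ring
      rw [hj, v2_two_mul (by positivity), hjj, v2_two_mul (by omega),
        ih j (by omega) (by rw [pow_succ] at h2; omega)]
    · have hi : i % 2 = 1 := Nat.odd_iff.mp ho
      have h3 : (2 ^ (k+1) + i) % 2 = 1 := by
        have : 2 ^ (k+1) % 2 = 0 := by
          rw [pow_succ, Nat.mul_mod_left]
        omega
      rw [v2_odd h3, v2_odd hi]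

/-- L m = position of last occurrence of m in Conolly sequence -/
def L : ℕ → ℕ
  | 0 => 0
  | m + 1 => L m + v2 (m + 1) + 1

lemma L_succ (m : ℕ) : L (m + 1) = L m + v2 (m + 1) + 1 := rfl

lemma L_strictMono : StrictMono L := strictMono_nat_of_lt_succ (fun m => by rw [L_succ]; omega)

lemma L_mono : Monotone L := L_strictMono.monotone

lemma le_L (m : ℕ) : m ≤ L m := by
  induction m with
  | zero => simp [L]
  | succ m ih => rw [L_succ]; omega

/-- The Conolly sequence. -/
def C (n : ℕ) : ℕ := Nat.findGreatest (fun m => L m < n) n + 1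

lemma C_pos (n : ℕ) : 1 ≤ C n := Nat.le_add_left 1 _

lemma L_C_pred_lt {n : ℕ} (hn : 1 ≤ n) : L (C n - 1) < n := by
  have := Nat.findGreatest_spec (P := fun m => L m < n) (m := 0) (n := n)
    (Nat.zero_le n) (show L 0 < n by simp [L]; omega)
  unfold C
  simpa using this

lemma le_L_C (n : ℕ) : n ≤ L (C n) := by
  unfold C
  set c := Nat.findGreatest (fun m => L m < n) n with hc
  by_cases h : c + 1 ≤ n
  · have := Nat.findGreatest_is_greatest (P := fun m => L m < n) (n := n)
      (k := c + 1) (by omega) h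
    have this : ¬ L (c + 1) < n := this
    omega
  · have := le_L (c + 1); omega

lemma C_le_of_le {n m : ℕ} (hn : 1 ≤ n) (h : n ≤ L m) : C n ≤ m := by
  by_contra hc
  push_neg at hc
  have h2 : m ≤ C n - 1 := by omega
  have h3 := L_mono h2
  have h4 := L_C_pred_lt hn
  omega

lemma lt_C_of_lt {n m : ℕ} (h : L m < n) : m < C n := by
  have h1 : m ≤ n := le_trans (le_L m) (by omega)
  have := Nat.le_findGreatest (P := fun t => L t < n) h1 h
  unfold C; omega

lemma C_eq_of {n m : ℕ} (hm : 1 ≤ m) (h1 : L (m - 1) < n) (h2 : n ≤ L m) : C n = m := by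
  have h3 := lt_C_of_lt h1
  have h4 := C_le_of_le (n := n) (by have := le_L (m-1); omega) h2
  omega

lemma C_le {n : ℕ} (hn : 1 ≤ n) : C n ≤ n := by
  have h1 := L_C_pred_lt hn
  have h2 := le_L (C n - 1)
  omega

lemma two_pow_succ (k : ℕ) : 2 ^ (k + 1) = 2 ^ k + 2 ^ k := by rw [pow_succ]; ring

lemma L_shift (k : ℕ) : ∀ s, s < 2 ^ k → L (2 ^ k + s) = L (2 ^ k) + L s := by
  intro s
  induction s with
  | zero => simp [L]
  | succ s ih =>
    intro hs
    have hv := v2_shift k (s+1) (by omega) hs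
    rw [← Nat.add_assoc] at hv
    have h1 : 2 ^ k + (s + 1) = (2 ^ k + s) + 1 := by ring
    rw [h1, L_succ, ih (by omega), hv, L_succ]
    ring

lemma LpLq : ∀ k, L (2 ^ k) + 1 = 2 ^ (k + 1) ∧ L (2 ^ k - 1) + k + 2 = 2 ^ (k + 1) := by
  intro k
  induction k with
  | zero => constructor <;> decide
  | succ k ih =>
    obtain ⟨hp, hq⟩ := ih
    have hpow := Nat.one_le_two_pow (n := k)
    have h3 : (2:ℕ) ^ (k + 2) = 4 * 2 ^ k := by ring
    have h3' : (2:ℕ) ^ (k + 1 + 1) = 4 * 2 ^ k := by ring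
    have hq' : L (2 ^ (k+1) - 1) + (k + 1) + 2 = 2 ^ (k + 1 + 1) := by
      have h1 : 2 ^ (k+1) - 1 = 2 ^ k + (2 ^ k - 1) := by omega
      have h4 := L_shift k (2 ^ k - 1) (by omega)
      rw [h1, h4]
      omega
    refine ⟨?_, hq'⟩
    have h1 : (2:ℕ) ^ (k+1) = (2 ^ (k+1) - 1) + 1 := by omega
    rw [h1, L_succ, ← h1, v2_pow]
    omega

lemma L_pow (k : ℕ) : L (2 ^ k) + 1 = 2 ^ (k + 1) := (LpLq k).1

lemma L_pow_pred (k : ℕ) : L (2 ^ k - 1) + k + 2 = 2 ^ (k + 1) := (LpLq k).2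

lemma exists_decomp {n : ℕ} (hn : 1 ≤ n) : ∃ k t, n = 2 ^ k + t ∧ t < 2 ^ k := by
  refine ⟨Nat.log 2 n, n - 2 ^ Nat.log 2 n, ?_, ?_⟩
  · have := Nat.pow_log_le_self 2 (by omega : n ≠ 0); omega
  · have h1 := Nat.pow_log_le_self 2 (by omega : n ≠ 0)
    have h2 := Nat.lt_pow_succ_log_self (by norm_num : 1 < 2) n
    rw [pow_succ] at h2; omega

lemma L_le {m : ℕ} (hm : 1 ≤ m) : L m + 1 ≤ 2 * m := by
  induction m using Nat.strong_induction_on with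
  | _ m ih =>
    rcases eq_or_lt_of_le hm with h1 | h1
    · rw [← h1]; decide
    · obtain ⟨k, t, hm2, ht⟩ := exists_decomp (show 1 ≤ m by omega)
      have hpow := Nat.one_le_two_pow (n := k)
      have h3 := L_pow k
      rcases Nat.eq_zero_or_pos t with rfl | htpos
      · simp only [Nat.add_zero] at hm2; rw [hm2]; omega
      · have h5 := L_shift k t ht
        have h6 := ih t (by omega) htpos
        rw [hm2, h5]
        omega

lemma two_C_ge {t : ℕ} (ht : 1 ≤ t) : t + 1 ≤ 2 * C t := by
  have h1 := le_L_C t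
  have h2 := L_le (m := C t) (C_pos t)
  omega

/-- main shift identity (A): C (2^(k+1) + j) = 2^k + C (j+1) for j + 2 ≤ 2^(k+1) -/
lemma CA (k j : ℕ) (hj : j + 2 ≤ 2 ^ (k + 1)) : C (2 ^ (k + 1) + j) = 2 ^ k + C (j + 1) := by
  set c := C (j + 1) with hc
  have hc1 : 1 ≤ c := C_pos _
  have hpow := Nat.one_le_two_pow (n := k)
  have hLk := L_pow k
  have hcle : c ≤ 2 ^ k := by
    apply C_le_of_le (by omega)
    omega
  have hch1 : L (c - 1) < j + 1 := L_C_pred_lt (by omega)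
  have hch2 : j + 1 ≤ L c := le_L_C _
  apply C_eq_of (by omega)
  · have h1 : 2 ^ k + c - 1 = 2 ^ k + (c - 1) := by omega
    rw [h1, L_shift k (c - 1) (by omega)]
    omega
  · rcases eq_or_lt_of_le hcle with h1 | h1
    · have h4 : 2 ^ k + c = 2 ^ (k + 1) := by rw [h1, two_pow_succ]
      rw [h4]
      have h5 := L_pow (k + 1)
      have h6 : (2:ℕ) ^ (k + 1 + 1) = 4 * 2 ^ k := by ring
      omega
    · rw [L_shift k c h1]
      omega

/-- (B): C (2^(k+1) - 1) = 2^k -/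
lemma CB (k : ℕ) : C (2 ^ (k + 1) - 1) = 2 ^ k := by
  have hpow := Nat.one_le_two_pow (n := k)
  have h5 := L_pow_pred k
  have h6 := L_pow k
  apply C_eq_of Nat.one_le_two_pow <;> omega

/-- top-run: C (2^(k+1) - c) = 2^k for 1 ≤ c ≤ k + 1 -/
lemma C_top (k c : ℕ) (hc1 : 1 ≤ c) (hc2 : c ≤ k + 1) : C (2 ^ (k + 1) - c) = 2 ^ k := by
  have hpow := Nat.one_le_two_pow (n := k)
  have h5 := L_pow_pred k
  have h6 := L_pow k
  apply C_eq_of Nat.one_le_two_pow <;> omega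

lemma Cvals : C 1 = 1 ∧ C 2 = 2 ∧ C 3 = 2 ∧ C 4 = 3 ∧ C 5 = 4 := by decide

set_option maxRecDepth 10000 in
lemma Cbase : ∀ n : ℕ, n < 64 → 5 < n → C n = C (n - C (n - 2)) + C (n - 3 - C (n - 5)) := by
  decide

lemma CRec : ∀ n, 5 < n → C n = C (n - C (n - 2)) + C (n - 3 - C (n - 5)) := by
  intro n
  induction n using Nat.strong_induction_on with
  | _ n ih =>
    intro hn6
    obtain ⟨hC1, hC2, hC3, hC4, hC5⟩ := Cvals
    by_cases hsmall : n < 64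
    · exact Cbase n hsmall hn6
    push_neg at hsmall
    obtain ⟨k, j, hnkj, hjk⟩ := exists_decomp (show 1 ≤ n by omega)
    have hk6 : 6 ≤ k := by
      by_contra h
      push_neg at h
      have h1 : (2:ℕ)^k ≤ 2^5 := Nat.pow_le_pow_right (by norm_num) (by omega)
      have h2 : (2:ℕ)^5 = 32 := by norm_num
      omega
    obtain ⟨K, rfl⟩ : ∃ K, k = K + 2 := ⟨k - 2, by omega⟩
    have hK4 : 4 ≤ K := by omega
    have hp16 : 16 ≤ 2^K := by
      calc (16:ℕ) = 2^4 := by norm_num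
      _ ≤ 2^K := Nat.pow_le_pow_right (by norm_num) hK4
    have e1 : (2:ℕ)^(K+1) = 2 * 2^K := by ring
    have e2 : (2:ℕ)^(K+2) = 4 * 2^K := by ring
    have e1' : (2:ℕ)^(K+1+1) = 4 * 2^K := by ring
    have hCA2 : ∀ i, i + 2 ≤ 4 * 2^K → C (2^(K+2) + i) = 2^(K+1) + C (i+1) := by
      intro i hi
      exact CA (K+1) i (by omega)
    have hCA1 : ∀ i, i + 2 ≤ 2 * 2^K → C (2^(K+1) + i) = 2^K + C (i+1) := by
      intro i hi
      exact CA K i (by omega)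
    have hTop2 : ∀ c, 1 ≤ c → c ≤ K + 2 → C (2^(K+2) - c) = 2^(K+1) := by
      intro c hc1 hc2
      exact C_top (K+1) c hc1 (by omega)
    have hTop1 : ∀ c, 1 ≤ c → c ≤ K + 1 → C (2^(K+1) - c) = 2^K := by
      intro c hc1 hc2
      exact C_top K c hc1 (by omega)
    rcases lt_or_ge j 5 with hj5 | hj5
    · -- low boundary cases
      interval_cases j
      · -- j = 0
        have hva : C (n - C (n - 2)) = 2^K + 1 := by
          rw [show n - 2 = 2^(K+2) - 2 from by omega, hTop2 2 (by omega) (by omega),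
            show n - 2^(K+1) = 2^(K+1) + 0 from by omega, hCA1 0 (by omega), hC1]
        have hvb : C (n - 3 - C (n - 5)) = 2^K := by
          rw [show n - 5 = 2^(K+2) - 5 from by omega, hTop2 5 (by omega) (by omega),
            show n - 3 - 2^(K+1) = 2^(K+1) - 3 from by omega, hTop1 3 (by omega) (by omega)]
        have hvn : C n = 2^(K+1) + 1 := by
          rw [show n = 2^(K+2) + 0 from by omega, hCA2 0 (by omega), hC1]
        rw [hvn, hva, hvb]; omega
      · -- j = 1
        have hva : C (n - C (n - 2)) = 2^K + 2 := by
          rw [show n - 2 = 2^(K+2) - 1 from by omega, hTop2 1 (by omega) (by omega),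
            show n - 2^(K+1) = 2^(K+1) + 1 from by omega, hCA1 1 (by omega)]
          norm_num [hC2]
        have hvb : C (n - 3 - C (n - 5)) = 2^K := by
          rw [show n - 5 = 2^(K+2) - 4 from by omega, hTop2 4 (by omega) (by omega),
            show n - 3 - 2^(K+1) = 2^(K+1) - 2 from by omega, hTop1 2 (by omega) (by omega)]
        have hvn : C n = 2^(K+1) + 2 := by
          rw [show n = 2^(K+2) + 1 from by omega, hCA2 1 (by omega)]
          norm_num [hC2]
        rw [hvn, hva, hvb]; omega
      · -- j = 2
        have hva : C (n - C (n - 2)) = 2^K + 2 := by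
          rw [show n - 2 = 2^(K+2) + 0 from by omega, hCA2 0 (by omega), hC1,
            show n - (2^(K+1) + 1) = 2^(K+1) + 1 from by omega, hCA1 1 (by omega)]
          norm_num [hC2]
        have hvb : C (n - 3 - C (n - 5)) = 2^K := by
          rw [show n - 5 = 2^(K+2) - 3 from by omega, hTop2 3 (by omega) (by omega),
            show n - 3 - 2^(K+1) = 2^(K+1) - 1 from by omega, hTop1 1 (by omega) (by omega)]
        have hvn : C n = 2^(K+1) + 2 := by
          rw [show n = 2^(K+2) + 2 from by omega, hCA2 2 (by omega)]
          norm_num [hC3]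
        rw [hvn, hva, hvb]; omega
      · -- j = 3
        have hva : C (n - C (n - 2)) = 2^K + 2 := by
          rw [show n - 2 = 2^(K+2) + 1 from by omega, hCA2 1 (by omega),
            show (1:ℕ) + 1 = 2 from rfl, hC2,
            show n - (2^(K+1) + 2) = 2^(K+1) + 1 from by omega, hCA1 1 (by omega)]
          norm_num [hC2]
        have hvb : C (n - 3 - C (n - 5)) = 2^K + 1 := by
          rw [show n - 5 = 2^(K+2) - 2 from by omega, hTop2 2 (by omega) (by omega),
            show n - 3 - 2^(K+1) = 2^(K+1) + 0 from by omega, hCA1 0 (by omega), hC1]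
        have hvn : C n = 2^(K+1) + 3 := by
          rw [show n = 2^(K+2) + 3 from by omega, hCA2 3 (by omega)]
          norm_num [hC4]
        rw [hvn, hva, hvb]; omega
      · -- j = 4
        have hva : C (n - C (n - 2)) = 2^K + 2 := by
          rw [show n - 2 = 2^(K+2) + 2 from by omega, hCA2 2 (by omega),
            show (2:ℕ) + 1 = 3 from rfl, hC3,
            show n - (2^(K+1) + 2) = 2^(K+1) + 2 from by omega, hCA1 2 (by omega)]
          norm_num [hC3]
        have hvb : C (n - 3 - C (n - 5)) = 2^K + 2 := by
          rw [show n - 5 = 2^(K+2) - 1 from by omega, hTop2 1 (by omega) (by omega),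
            show n - 3 - 2^(K+1) = 2^(K+1) + 1 from by omega, hCA1 1 (by omega)]
          norm_num [hC2]
        have hvn : C n = 2^(K+1) + 4 := by
          rw [show n = 2^(K+2) + 4 from by omega, hCA2 4 (by omega)]
          norm_num [hC5]
        rw [hvn, hva, hvb]; omega
    · rcases eq_or_lt_of_le (show j + 1 ≤ 2^(K+2) from hjk) with hjtop | hjtop
      · -- j = 2^(K+2) - 1, n = 2^(K+3) - 1
        have e3 : (2:ℕ)^(K+2+1) = 8 * 2^K := by ring
        have hva : C (n - C (n - 2)) = 2^(K+1) := by
          rw [show n - 2 = 2^(K+2) + (4 * 2^K - 3) from by omega, hCA2 _ (by omega),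
            show 4 * 2^K - 3 + 1 = 2^(K+2) - 2 from by omega, hTop2 2 (by omega) (by omega),
            show n - (2^(K+1) + 2^(K+1)) = 2^(K+2) - 1 from by omega,
            hTop2 1 (by omega) (by omega)]
        have hvb : C (n - 3 - C (n - 5)) = 2^(K+1) := by
          rw [show n - 5 = 2^(K+2) + (4 * 2^K - 6) from by omega, hCA2 _ (by omega),
            show 4 * 2^K - 6 + 1 = 2^(K+2) - 5 from by omega, hTop2 5 (by omega) (by omega),
            show n - 3 - (2^(K+1) + 2^(K+1)) = 2^(K+2) - 4 from by omega,
            hTop2 4 (by omega) (by omega)]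
        have hvn : C n = 2^(K+2) := by
          rw [show n = 2^(K+2+1) - 1 from by omega]
          exact CB (K+2)
        rw [hvn, hva, hvb]; omega
      · rcases eq_or_lt_of_le (show j + 2 ≤ 2^(K+2) from hjtop) with hjtop2 | hjtop2
        · -- j = 2^(K+2) - 2, n = 2^(K+3) - 2
          have hva : C (n - C (n - 2)) = 2^(K+1) := by
            rw [show n - 2 = 2^(K+2) + (4 * 2^K - 4) from by omega, hCA2 _ (by omega),
              show 4 * 2^K - 4 + 1 = 2^(K+2) - 3 from by omega, hTop2 3 (by omega) (by omega),
              show n - (2^(K+1) + 2^(K+1)) = 2^(K+2) - 2 from by omega,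
              hTop2 2 (by omega) (by omega)]
          have hvb : C (n - 3 - C (n - 5)) = 2^(K+1) := by
            rw [show n - 5 = 2^(K+2) + (4 * 2^K - 7) from by omega, hCA2 _ (by omega),
              show 4 * 2^K - 7 + 1 = 2^(K+2) - 6 from by omega, hTop2 6 (by omega) (by omega),
              show n - 3 - (2^(K+1) + 2^(K+1)) = 2^(K+2) - 5 from by omega,
              hTop2 5 (by omega) (by omega)]
          have hvn : C n = 2^(K+2) := by
            rw [show n = 2^(K+2) + (4 * 2^K - 2) from by omega, hCA2 _ (by omega),
              show 4 * 2^K - 2 + 1 = 2^(K+2) - 1 from by omega, hTop2 1 (by omega) (by omega)]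
            omega
          rw [hvn, hva, hvb]; omega
        · -- middle case: 5 ≤ j ≤ 2^(K+2) - 3
          set m := j + 1 with hm
          have hm6 : 6 ≤ m := by omega
          have hmle : m + 2 ≤ 4 * 2^K := by omega
          have hA : C (m - 2) ≤ m - 2 := C_le (by omega)
          have hA2 : (m - 2) + 1 ≤ 2 * C (m - 2) := two_C_ge (by omega)
          have hB : C (m - 5) ≤ m - 5 := C_le (by omega)
          have hB2 : (m - 5) + 1 ≤ 2 * C (m - 5) := two_C_ge (by omega)
          have hv2 : C (n - 2) = 2^(K+1) + C (m - 2) := by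
            rw [show n - 2 = 2^(K+2) + (j - 2) from by omega, hCA2 (j-2) (by omega),
              show j - 2 + 1 = m - 2 from by omega]
          have ha : n - C (n - 2) = 2^(K+1) + (m - C (m - 2) - 1) := by
            rw [hv2]; omega
          have hva : C (n - C (n - 2)) = 2^K + C (m - C (m - 2)) := by
            rw [ha, hCA1 _ (by omega), show m - C (m - 2) - 1 + 1 = m - C (m - 2) from by omega]
          have hv5 : C (n - 5) = 2^(K+1) + C (m - 5) := by
            rw [show n - 5 = 2^(K+2) + (j - 5) from by omega, hCA2 (j-5) (by omega),
              show j - 5 + 1 = m - 5 from by omega]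
          have hb : n - 3 - C (n - 5) = 2^(K+1) + (m - 3 - C (m - 5) - 1) := by
            rw [hv5]; omega
          have hvb : C (n - 3 - C (n - 5)) = 2^K + C (m - 3 - C (m - 5)) := by
            rw [hb, hCA1 _ (by omega),
              show m - 3 - C (m - 5) - 1 + 1 = m - 3 - C (m - 5) from by omega]
          have hvn : C n = 2^(K+1) + C m := by
            rw [hnkj, hCA2 j (by omega)]
          have ihm : C m = C (m - C (m - 2)) + C (m - 3 - C (m - 5)) :=
            ih m (by omega) (by omega)
          rw [hvn, hva, hvb, ihm]
          omega

lemma HeqC (H : ℕ → ℕ)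
    (h1 : H 1 = 1) (h2 : H 2 = 2) (h3 : H 3 = 2) (h4 : H 4 = 3) (h5 : H 5 = 4)
    (hrec : ∀ n, 5 < n → H n = H (n - H (n - 2)) + H (n - 3 - H (n - 5))) :
    ∀ n, 1 ≤ n → H n = C n := by
  intro n
  induction n using Nat.strong_induction_on with
  | _ n ih =>
    intro hn1
    obtain ⟨hC1, hC2, hC3, hC4, hC5⟩ := Cvals
    by_cases hn5 : n ≤ 5
    · interval_cases n
      · rw [h1, hC1]
      · rw [h2, hC2]
      · rw [h3, hC3]
      · rw [h4, hC4]
      · rw [h5, hC5]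
    push_neg at hn5
    have hH2 : H (n - 2) = C (n - 2) := ih (n - 2) (by omega) (by omega)
    have hH5 : H (n - 5) = C (n - 5) := ih (n - 5) (by omega) (by omega)
    have hc2le : C (n - 2) ≤ n - 2 := C_le (by omega)
    have hc2pos : 1 ≤ C (n - 2) := C_pos _
    have hc5le : C (n - 5) ≤ n - 5 := C_le (by omega)
    have hHa : H (n - H (n - 2)) = C (n - C (n - 2)) := by
      rw [hH2]; exact ih _ (by omega) (by omega)
    have hHb : H (n - 3 - H (n - 5)) = C (n - 3 - C (n - 5)) := by
      rw [hH5]; exact ih _ (by omega) (by omega)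
    rw [hrec n (by omega), hHa, hHb, ← CRec n (by omega)]

lemma C_slow {n : ℕ} (hn : 1 ≤ n) : C n ≤ C (n + 1) ∧ C (n + 1) ≤ C n + 1 := by
  constructor
  · exact C_le_of_le hn (by have := le_L_C (n + 1); omega)
  · refine C_le_of_le (by omega) ?_
    have h1 := le_L_C n
    have h2 := L_strictMono (show C n < C n + 1 by omega)
    omega

lemma Ccount {m : ℕ} (hm : 1 ≤ m) :
    {n : ℕ | 1 ≤ n ∧ C n = m}.ncard = v2 m + 1 := by
  have hset : {n : ℕ | 1 ≤ n ∧ C n = m} = Set.Ioc (L (m - 1)) (L m) := by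
    ext n
    simp only [Set.mem_setOf_eq, Set.mem_Ioc]
    constructor
    · rintro ⟨hn1, rfl⟩
      exact ⟨L_C_pred_lt hn1, le_L_C n⟩
    · rintro ⟨hl1, hl2⟩
      exact ⟨by omega, C_eq_of hm hl1 hl2⟩
  rw [hset, ← Finset.coe_Ioc, Set.ncard_coe_finset, Nat.card_Ioc]
  have hLs := L_succ (m - 1)
  rw [show m - 1 + 1 = m from by omega] at hLs
  omega

lemma v2_eq_padic : ∀ m, 1 ≤ m → padicValNat 2 m = v2 m := by
  haveI : Fact (Nat.Prime 2) := ⟨Nat.prime_two⟩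
  intro m
  induction m using Nat.strong_induction_on with
  | _ m ih =>
    intro hm1
    rcases Nat.even_or_odd m with he | ho
    · obtain ⟨t, rfl⟩ := he
      have ht1 : 1 ≤ t := by omega
      have h1 : t + t = 2 * t := by ring
      rw [h1, v2_two_mul (by omega), padicValNat.mul (by norm_num) (by omega),
        padicValNat.self (by norm_num), ih t (by omega) ht1]
      omega
    · rw [v2_odd (Nat.odd_iff.mp ho), padicValNat.eq_zero_of_not_dvd]
      have := Nat.odd_iff.mp ho
      omega

/-- The recursion `H(n) = H(n - H(n-2)) + H(n - 3 - H(n-5))` with initial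
conditions `H(1)=1, H(2)=H(3)=2, H(4)=3, H(5)=4` has a unique solution (on
positive indices), and this solution is the Conolly sequence: it is slow and
each positive integer `m` occurs exactly `r_m = v₂(m)+1` times. -/
theorem H_recursion_is_conolly (H H' : ℕ → ℕ)
    (h1 : H 1 = 1) (h2 : H 2 = 2) (h3 : H 3 = 2) (h4 : H 4 = 3) (h5 : H 5 = 4)
    (hrec : ∀ n, 5 < n → H n = H (n - H (n - 2)) + H (n - 3 - H (n - 5)))
    (h1' : H' 1 = 1) (h2' : H' 2 = 2) (h3' : H' 3 = 2) (h4' : H' 4 = 3) (h5' : H' 5 = 4)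
    (hrec' : ∀ n, 5 < n → H' n = H' (n - H' (n - 2)) + H' (n - 3 - H' (n - 5))) :
    (∀ n, 1 ≤ n → H n = H' n) ∧
    (∀ n, 1 ≤ n → H (n + 1) = H n ∨ H (n + 1) = H n + 1) ∧
    (∀ m, 1 ≤ m → {n : ℕ | 1 ≤ n ∧ H n = m}.ncard = padicValNat 2 m + 1) := by
  have hH := HeqC H h1 h2 h3 h4 h5 hrec
  have hH' := HeqC H' h1' h2' h3' h4' h5' hrec'
  refine ⟨?_, ?_, ?_⟩
  · intro n hn
    rw [hH n hn, hH' n hn]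
  · intro n hn
    rw [hH n hn, hH (n + 1) (by omega)]
    have := C_slow hn
    omega
  · intro m hm
    have hset : {n : ℕ | 1 ≤ n ∧ H n = m} = {n : ℕ | 1 ≤ n ∧ C n = m} := by
      ext n
      simp only [Set.mem_setOf_eq]
      constructor
      · rintro ⟨hn1, hn2⟩
        exact ⟨hn1, by rw [← hH n hn1]; exact hn2⟩
      · rintro ⟨hn1, hn2⟩
        exact ⟨hn1, by rw [hH n hn1]; exact hn2⟩
    rw [hset, Ccount hm, v2_eq_padic m hm]
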